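/- Fix a real α > 1, and let h : ℝ → ℝ be any function such that for every c > 1 one has 1 < h(c) < 1 + (c−1)/α and D(1/α ‖ (h(c)−1)/(c−1)) = ln(c)/α. Then h is differentiable at every point c > 1. Symmetrically, fix a real c > 1, and let g : ℝ → ℝ be any function such that for every α > 1 one has 1 < g(α) < 1 + (c−1)/α and D(1/α ‖ (g(α)−1)/(c−1)) = ln(c)/α. Then g is differentiable at every point α > 1. -/

import Mathlib

/-- Kullback–Leibler divergence `D(a‖b) = a·ln(a/b) + (1−a)·ln((1−a)/(1−b))`.
(The convention `0·ln 0 = 0` holds automatically since `Real.log 0 = 0`.) -/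
noncomputable def klDiv (a b : ℝ) : ℝ :=
  a * Real.log (a / b) + (1 - a) * Real.log ((1 - a) / (1 - b))

open Filter Topology Set

lemma kl_hasDerivAt {a b : ℝ} (ha0 : 0 < a) (ha1 : a < 1) (hb0 : 0 < b) (hb1 : b < 1) :
    HasDerivAt (klDiv a) ((b - a) / (b * (1 - b))) b := by
  have hb0' : b ≠ 0 := hb0.ne'
  have hb1' : (1 : ℝ) - b ≠ 0 := sub_ne_zero.2 hb1.ne'
  have h1 : HasDerivAt (fun t : ℝ => a / t) (a * -(b ^ 2)⁻¹) b := by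
    simpa [div_eq_mul_inv] using (hasDerivAt_inv hb0').const_mul a
  have h2 : HasDerivAt (fun t : ℝ => Real.log (a / t)) ((a * -(b ^ 2)⁻¹) / (a / b)) b :=
    h1.log (div_ne_zero ha0.ne' hb0')
  have h3 : HasDerivAt (fun t : ℝ => (1 - a) / (1 - t)) ((1 - a) * (-(0 - 1) / (1 - b) ^ 2)) b := by
    simpa [div_eq_mul_inv] using
      (((hasDerivAt_const b (1 : ℝ)).sub (hasDerivAt_id b)).inv hb1').const_mul (1 - a)
  have h4 : HasDerivAt (fun t : ℝ => Real.log ((1 - a) / (1 - t)))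
      (((1 - a) * (-(0 - 1) / (1 - b) ^ 2)) / ((1 - a) / (1 - b))) b :=
    h3.log (div_ne_zero (sub_ne_zero.2 ha1.ne') hb1')
  have hsum := (h2.const_mul a).add (h4.const_mul (1 - a))
  have hres : HasDerivAt (fun t : ℝ => a * Real.log (a / t) + (1 - a) * Real.log ((1 - a) / (1 - t)))
      ((b - a) / (b * (1 - b))) b := by
    refine hsum.congr_deriv ?_
    have ha' : a ≠ 0 := ha0.ne'
    have ha1' : (1 : ℝ) - a ≠ 0 := sub_ne_zero.2 ha1.ne'
    field_simp
    ring
  exact hres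

lemma kl_strictAnti {a : ℝ} (ha0 : 0 < a) (ha1 : a < 1) :
    StrictAntiOn (klDiv a) (Set.Ioo 0 a) := by
  apply strictAntiOn_of_deriv_neg (convex_Ioo 0 a)
  · intro b hb
    exact ((kl_hasDerivAt ha0 ha1 hb.1 (hb.2.trans ha1)).differentiableAt.continuousAt).continuousWithinAt
  · intro b hb
    rw [interior_Ioo] at hb
    rw [(kl_hasDerivAt ha0 ha1 hb.1 (hb.2.trans ha1)).deriv]
    exact div_neg_of_neg_of_pos (sub_neg.2 hb.2) (mul_pos hb.1 (by nlinarith [hb.2]))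

lemma contDiffAt_klDiv_comp {A B : ℝ × ℝ → ℝ} {p : ℝ × ℝ}
    (hA : ContDiffAt ℝ 1 A p) (hB : ContDiffAt ℝ 1 B p)
    (h1 : A p / B p ≠ 0) (h2 : (1 - A p) / (1 - B p) ≠ 0) :
    ContDiffAt ℝ 1 (fun q => klDiv (A q) (B q)) p := by
  have hBp : B p ≠ 0 := fun h => h1 (by simp [h, div_zero])
  have hBp1 : (1 : ℝ) - B p ≠ 0 := fun h => h2 (by simp [h, div_zero])
  unfold klDiv
  exact (hA.mul ((hA.div hB hBp).log h1)).add
    ((contDiffAt_const.sub hA).mul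
      (((contDiffAt_const.sub hA).div (contDiffAt_const.sub hB) hBp1).log h2))

lemma implicit_diff {F : ℝ × ℝ → ℝ} {x₀ y₀ m : ℝ} {h : ℝ → ℝ} {U : Set (ℝ × ℝ)}
    (hU : IsOpen U) (hpU : (x₀, y₀) ∈ U)
    (hF : ContDiffAt ℝ 1 F (x₀, y₀))
    (hm : HasDerivAt (fun y => F (x₀, y)) m y₀) (hm0 : m ≠ 0)
    (hF0 : F (x₀, y₀) = 0)
    (huniq : ∀ x y₁ y₂, (x, y₁) ∈ U → (x, y₂) ∈ U → F (x, y₁) = 0 → F (x, y₂) = 0 → y₁ = y₂)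
    (hh : ∀ᶠ x in 𝓝 x₀, (x, h x) ∈ U ∧ F (x, h x) = 0) :
    DifferentiableAt ℝ h x₀ := by
  set p : ℝ × ℝ := (x₀, y₀) with hp
  have hd : HasStrictFDerivAt F (fderiv ℝ F p) p := hF.hasStrictFDerivAt one_ne_zero
  have hdiffF : DifferentiableAt ℝ F p := hF.differentiableAt one_ne_zero
  have hline : HasDerivAt (fun y : ℝ => ((x₀, y) : ℝ × ℝ)) ((0 : ℝ), (1 : ℝ)) y₀ :=
    (hasDerivAt_const y₀ x₀).prodMk (hasDerivAt_id y₀)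
  have hB : HasDerivAt (fun y => F (x₀, y)) (fderiv ℝ F p (0, 1)) y₀ :=
    hdiffF.hasFDerivAt.comp_hasDerivAt y₀ hline
  set A : ℝ := fderiv ℝ F p (1, 0) with hA
  set B : ℝ := fderiv ℝ F p (0, 1) with hBdef
  have hmB : B = m := (hB.unique hm)
  have hB0 : B ≠ 0 := hmB ▸ hm0
  have lin : ∀ u v : ℝ, fderiv ℝ F p (u, v) = u * A + v * B := by
    intro u v
    have huv : ((u, v) : ℝ × ℝ) = u • ((1 : ℝ), (0 : ℝ)) + v • ((0 : ℝ), (1 : ℝ)) := by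
      simp [Prod.ext_iff]
    rw [huv, map_add, map_smul, map_smul, smul_eq_mul, smul_eq_mul]
  let e₁ : ℝ × ℝ →L[ℝ] ℝ × ℝ := (ContinuousLinearMap.fst ℝ ℝ ℝ).prod (fderiv ℝ F p)
  let e₂ : ℝ × ℝ →L[ℝ] ℝ × ℝ := (ContinuousLinearMap.fst ℝ ℝ ℝ).prod
      (B⁻¹ • (ContinuousLinearMap.snd ℝ ℝ ℝ - A • ContinuousLinearMap.fst ℝ ℝ ℝ))
  have he₁ : ∀ q : ℝ × ℝ, e₁ q = (q.1, q.1 * A + q.2 * B) := by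
    intro q
    simp [e₁, lin q.1 q.2]
  have he₂ : ∀ q : ℝ × ℝ, e₂ q = (q.1, B⁻¹ * (q.2 - A * q.1)) := by
    intro q
    simp [e₂, ContinuousLinearMap.smul_apply, ContinuousLinearMap.sub_apply]
    try ring
  let e : (ℝ × ℝ) ≃L[ℝ] (ℝ × ℝ) := ContinuousLinearEquiv.equivOfInverse e₁ e₂
    (fun q => by
      rw [he₁ q, he₂]
      have h9 : B⁻¹ * (q.1 * A + q.2 * B - A * q.1) = q.2 := by field_simp; ring
      rw [h9])
    (fun q => by
      rw [he₂ q, he₁]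
      have h9 : q.1 * A + B⁻¹ * (q.2 - A * q.1) * B = q.2 := by field_simp; ring
      rw [h9])
  let f : ℝ × ℝ → ℝ × ℝ := fun q => (q.1, F q)
  have hf : HasStrictFDerivAt f (e : (ℝ × ℝ) →L[ℝ] (ℝ × ℝ)) p := by
    have h1 : HasStrictFDerivAt f e₁ p := hasStrictFDerivAt_fst.prodMk hd
    exact h1
  have hfp : f p = (x₀, 0) := by simp [f, hF0]; rfl
  set g := hf.localInverse f e p with hg
  have hg' : HasStrictFDerivAt g ((e.symm : (ℝ × ℝ) →L[ℝ] (ℝ × ℝ))) (x₀, 0) := by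
    rw [← hfp]; exact hf.to_localInverse
  have hgc : ContinuousAt g (x₀, 0) := by rw [← hfp]; exact hf.localInverse_continuousAt
  have hgp : g (x₀, 0) = p := by rw [← hfp]; exact hf.localInverse_apply_image
  set φ : ℝ → ℝ := fun x => (g (x, 0)).2 with hφ
  have hline2 : Tendsto (fun x : ℝ => ((x, (0 : ℝ)) : ℝ × ℝ)) (𝓝 x₀) (𝓝 (x₀, 0)) :=
    (continuous_id.prodMk continuous_const).tendsto x₀
  have hφdiff : DifferentiableAt ℝ φ x₀ := by
    have h1 : DifferentiableAt ℝ g (x₀, 0) := hg'.differentiableAt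
    have h2 : DifferentiableAt ℝ (fun x : ℝ => ((x, (0 : ℝ)) : ℝ × ℝ)) x₀ :=
      differentiableAt_id.prodMk (differentiableAt_const _)
    exact differentiableAt_snd.comp x₀ (h1.comp x₀ h2)
  have hre : ∀ᶠ x in 𝓝 x₀, f (g (x, 0)) = (x, 0) := by
    have h1 := hf.eventually_right_inverse
    rw [hfp] at h1
    exact hline2.eventually h1
  have hfix : ∀ᶠ x in 𝓝 x₀, g (x, 0) = (x, φ x) := hre.mono fun x hx => by
    have h1 : (g (x, 0)).1 = x := congrArg Prod.fst hx
    rw [hφ]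
    exact Prod.ext h1 rfl
  have hFφ : ∀ᶠ x in 𝓝 x₀, F (x, φ x) = 0 := (hre.and hfix).mono fun x ⟨hx, hgx⟩ => by
    have h2 : F (g (x, 0)) = 0 := congrArg Prod.snd hx
    rwa [hgx] at h2
  have hmemφ : ∀ᶠ x in 𝓝 x₀, (x, φ x) ∈ U := by
    have ht : Tendsto (fun x => g (x, 0)) (𝓝 x₀) (𝓝 p) := by
      have h1 := hgc.tendsto.comp hline2
      rwa [hgp] at h1
    have h1 : ∀ᶠ x in 𝓝 x₀, g (x, 0) ∈ U := ht (hU.mem_nhds hpU)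
    exact (h1.and hfix).mono fun x ⟨h2, h3⟩ => h3 ▸ h2
  have heq : h =ᶠ[𝓝 x₀] φ :=
    (hh.and (hmemφ.and hFφ)).mono fun x ⟨⟨hU1, hF1⟩, hU2, hF2⟩ =>
      huniq x (h x) (φ x) hU1 hU2 hF1 hF2
  exact (heq.differentiableAt_iff).mpr hφdiff

/-- For fixed `α > 1`, any function `h` satisfying for all `c > 1` that
`1 < h(c) < 1 + (c−1)/α` and `D(1/α ‖ (h(c)−1)/(c−1)) = ln(c)/α` is differentiable at
every `c > 1`; symmetrically, for fixed `c > 1`, any function `g` satisfying for all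
`α > 1` that `1 < g(α) < 1 + (c−1)/α` and `D(1/α ‖ (g(α)−1)/(c−1)) = ln(c)/α` is
differentiable at every `α > 1`. -/
theorem stmt4 :
    (∀ α : ℝ, 1 < α → ∀ h : ℝ → ℝ,
      (∀ c : ℝ, 1 < c → (1 < h c ∧ h c < 1 + (c - 1) / α) ∧
        klDiv (1 / α) ((h c - 1) / (c - 1)) = Real.log c / α) →
      ∀ c : ℝ, 1 < c → DifferentiableAt ℝ h c) ∧
    (∀ c : ℝ, 1 < c → ∀ g : ℝ → ℝ,
      (∀ α : ℝ, 1 < α → (1 < g α ∧ g α < 1 + (c - 1) / α) ∧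
        klDiv (1 / α) ((g α - 1) / (c - 1)) = Real.log c / α) →
      ∀ α : ℝ, 1 < α → DifferentiableAt ℝ g α) := by
  constructor
  · intro α hα h H c hc
    have hα0 : (0 : ℝ) < α := by linarith
    have ha0 : 0 < 1 / α := by positivity
    have ha1 : 1 / α < 1 := by rw [div_lt_one hα0]; exact hα
    obtain ⟨⟨hy1, hy2⟩, heq⟩ := H c hc
    have hc1 : (0 : ℝ) < c - 1 := by linarith
    have hb0 : 0 < (h c - 1) / (c - 1) := div_pos (by linarith) hc1
    have hkey : α * (h c - 1) < c - 1 := by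
      have h1 : h c - 1 < (c - 1) / α := by linarith
      have h2 := (lt_div_iff₀ hα0).1 h1
      linarith
    have hba : (h c - 1) / (c - 1) < 1 / α := by
      rw [div_lt_div_iff₀ hc1 hα0]; linarith
    have hb1 : (h c - 1) / (c - 1) < 1 := hba.trans ha1
    apply implicit_diff (F := fun q : ℝ × ℝ => klDiv (1 / α) ((q.2 - 1) / (q.1 - 1)) - Real.log q.1 / α)
      (U := {q : ℝ × ℝ | 1 < q.1 ∧ 1 < q.2 ∧ α * (q.2 - 1) < q.1 - 1})
      (y₀ := h c)
      (m := ((h c - 1) / (c - 1) - 1 / α) / ((h c - 1) / (c - 1) * (1 - (h c - 1) / (c - 1))) * (1 / (c - 1)))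
    · rw [setOf_and, setOf_and]
      exact (isOpen_lt continuous_const continuous_fst).inter
        ((isOpen_lt continuous_const continuous_snd).inter
          (isOpen_lt (by fun_prop) (by fun_prop)))
    · exact ⟨hc, hy1, hkey⟩
    · apply ContDiffAt.sub
      · exact contDiffAt_klDiv_comp contDiffAt_const
          ((contDiffAt_snd.sub contDiffAt_const).div (contDiffAt_fst.sub contDiffAt_const)
            (sub_ne_zero.2 hc.ne'))
          (ne_of_gt (div_pos ha0 hb0))
          (ne_of_gt (div_pos (by linarith) (by linarith)))
      · exact (contDiffAt_fst.log (show ((c : ℝ), h c).1 ≠ 0 from ne_of_gt (by linarith))).div_const α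
    · have hinner : HasDerivAt (fun y : ℝ => (y - 1) / (c - 1)) (1 / (c - 1)) (h c) := by
        simpa using ((hasDerivAt_id (h c)).sub_const 1).div_const (c - 1)
      have hcomp := (kl_hasDerivAt ha0 ha1 hb0 hb1).comp (h c) hinner
      exact hcomp.sub_const (Real.log c / α)
    · exact mul_ne_zero (div_ne_zero (sub_ne_zero.2 hba.ne)
        (mul_pos hb0 (by linarith)).ne') (one_div_ne_zero hc1.ne')
    · exact sub_eq_zero.2 heq
    · intro x y₁ y₂ ⟨hx1, hy₁1, hy₁2⟩ ⟨_, hy₂1, hy₂2⟩ hF1 hF2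
      have hx0 : (0 : ℝ) < x - 1 := by linarith
      have m₁ : (y₁ - 1) / (x - 1) ∈ Set.Ioo 0 (1 / α) :=
        ⟨div_pos (by linarith) hx0, by rw [div_lt_div_iff₀ hx0 hα0]; linarith⟩
      have m₂ : (y₂ - 1) / (x - 1) ∈ Set.Ioo 0 (1 / α) :=
        ⟨div_pos (by linarith) hx0, by rw [div_lt_div_iff₀ hx0 hα0]; linarith⟩
      have heq2 : klDiv (1 / α) ((y₁ - 1) / (x - 1)) = klDiv (1 / α) ((y₂ - 1) / (x - 1)) := by
        simp only at hF1 hF2; linarith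
      have hb12 := (kl_strictAnti ha0 ha1).injOn m₁ m₂ heq2
      rw [div_eq_div_iff (ne_of_gt hx0) (ne_of_gt hx0)] at hb12
      have := mul_right_cancel₀ (ne_of_gt hx0) hb12
      linarith
    · filter_upwards [eventually_gt_nhds hc] with x hx
      obtain ⟨⟨g1, g2⟩, geq⟩ := H x hx
      refine ⟨⟨hx, g1, ?_⟩, sub_eq_zero.2 geq⟩
      have h1 : h x - 1 < (x - 1) / α := by linarith
      have h2 := (lt_div_iff₀ hα0).1 h1
      linarith
  · intro c hc g H α hα
    have hα0 : (0 : ℝ) < α := by linarith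
    have ha0 : 0 < 1 / α := by positivity
    have ha1 : 1 / α < 1 := by rw [div_lt_one hα0]; exact hα
    obtain ⟨⟨hy1, hy2⟩, heq⟩ := H α hα
    have hc1 : (0 : ℝ) < c - 1 := by linarith
    have hb0 : 0 < (g α - 1) / (c - 1) := div_pos (by linarith) hc1
    have hkey : α * (g α - 1) < c - 1 := by
      have h1 : g α - 1 < (c - 1) / α := by linarith
      have h2 := (lt_div_iff₀ hα0).1 h1
      linarith
    have hba : (g α - 1) / (c - 1) < 1 / α := by
      rw [div_lt_div_iff₀ hc1 hα0]; linarith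
    have hb1 : (g α - 1) / (c - 1) < 1 := hba.trans ha1
    apply implicit_diff (F := fun q : ℝ × ℝ => klDiv (1 / q.1) ((q.2 - 1) / (c - 1)) - Real.log c / q.1)
      (U := {q : ℝ × ℝ | 1 < q.1 ∧ 1 < q.2 ∧ q.1 * (q.2 - 1) < c - 1})
      (y₀ := g α)
      (m := ((g α - 1) / (c - 1) - 1 / α) / ((g α - 1) / (c - 1) * (1 - (g α - 1) / (c - 1))) * (1 / (c - 1)))
    · rw [setOf_and, setOf_and]
      exact (isOpen_lt continuous_const continuous_fst).inter
        ((isOpen_lt continuous_const continuous_snd).inter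
          (isOpen_lt (by fun_prop) (by fun_prop)))
    · exact ⟨hα, hy1, by linarith [hkey]⟩
    · apply ContDiffAt.sub
      · exact contDiffAt_klDiv_comp
          (contDiffAt_const.div contDiffAt_fst (show ((α : ℝ), g α).1 ≠ 0 from ne_of_gt (by linarith)))
          ((contDiffAt_snd.sub contDiffAt_const).div_const (c - 1))
          (ne_of_gt (div_pos ha0 hb0))
          (ne_of_gt (div_pos (by linarith) (by linarith)))
      · exact contDiffAt_const.div contDiffAt_fst (show ((α : ℝ), g α).1 ≠ 0 from ne_of_gt (by linarith))
    · have hinner : HasDerivAt (fun y : ℝ => (y - 1) / (c - 1)) (1 / (c - 1)) (g α) := by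
        simpa using ((hasDerivAt_id (g α)).sub_const 1).div_const (c - 1)
      have hcomp := (kl_hasDerivAt ha0 ha1 hb0 hb1).comp (g α) hinner
      exact hcomp.sub_const (Real.log c / α)
    · exact mul_ne_zero (div_ne_zero (sub_ne_zero.2 hba.ne)
        (mul_pos hb0 (by linarith)).ne') (one_div_ne_zero hc1.ne')
    · exact sub_eq_zero.2 heq
    · intro x y₁ y₂ ⟨hx1, hy₁1, hy₁2⟩ ⟨_, hy₂1, hy₂2⟩ hF1 hF2
      have hx0 : (0 : ℝ) < x := by linarith
      have hax0 : 0 < 1 / x := by positivity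
      have hax1 : 1 / x < 1 := by rw [div_lt_one hx0]; exact hx1
      have m₁ : (y₁ - 1) / (c - 1) ∈ Set.Ioo 0 (1 / x) :=
        ⟨div_pos (by linarith) hc1, by rw [div_lt_div_iff₀ hc1 hx0]; linarith⟩
      have m₂ : (y₂ - 1) / (c - 1) ∈ Set.Ioo 0 (1 / x) :=
        ⟨div_pos (by linarith) hc1, by rw [div_lt_div_iff₀ hc1 hx0]; linarith⟩
      have heq2 : klDiv (1 / x) ((y₁ - 1) / (c - 1)) = klDiv (1 / x) ((y₂ - 1) / (c - 1)) := by
        simp only at hF1 hF2; linarith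
      have hb12 := (kl_strictAnti hax0 hax1).injOn m₁ m₂ heq2
      rw [div_eq_div_iff (ne_of_gt hc1) (ne_of_gt hc1)] at hb12
      have := mul_right_cancel₀ (ne_of_gt hc1) hb12
      linarith
    · filter_upwards [eventually_gt_nhds hα] with x hx
      obtain ⟨⟨g1, g2⟩, geq⟩ := H x hx
      have hx0 : (0 : ℝ) < x := by linarith
      refine ⟨⟨hx, g1, ?_⟩, sub_eq_zero.2 geq⟩
      have h1 : g x - 1 < (c - 1) / x := by linarith
      have h2 := (lt_div_iff₀ hx0).1 h1
      linarith
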